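/- Let R be an associative ring with unity, M a left R-module, and P, Q submodules of M. If P is strongly irreducible in M or P is strongly hollow in M, then every R-linear map from the quotient module P/(P ∩ Q) to the quotient module Q/(P ∩ Q) is zero. -/

import Mathlib

/-- If a submodule `P` of `M` is strongly irreducible in `M` or strongly hollow in `M`,
then `Hom(P/(P ∩ Q), Q/(P ∩ Q)) = 0` for every submodule `Q` of `M`. -/
theorem hom_eq_zero_of_stronglyIrreducible_or_stronglyHollow
    {R : Type*} [Ring R] {M : Type*} [AddCommGroup M] [Module R M]
    (P Q : Submodule R M)
    (h : (∀ K L : Submodule R M, K ⊓ L ≤ P → K ≤ P ∨ L ≤ P) ∨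
         (∀ K L : Submodule R M, P ≤ K ⊔ L → P ≤ K ∨ P ≤ L)) :
    ∀ f : (P ⧸ (P ⊓ Q).comap P.subtype) →ₗ[R] (Q ⧸ (P ⊓ Q).comap Q.subtype),
      f = 0 := by
  intro f
  -- the "graph" submodule
  set N : Submodule R M :=
    { carrier := {m | ∃ (x : M) (hx : x ∈ P) (y : M) (hy : y ∈ Q),
        f (Submodule.Quotient.mk ⟨x, hx⟩) = Submodule.Quotient.mk ⟨y, hy⟩ ∧ m = x - y}
      zero_mem' := ⟨0, P.zero_mem, 0, Q.zero_mem, by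
        simp [show (⟨0, P.zero_mem⟩ : P) = 0 from rfl,
          show (⟨0, Q.zero_mem⟩ : Q) = 0 from rfl]; exact map_zero f, by simp⟩
      add_mem' := by
        rintro a b ⟨x1, hx1, y1, hy1, hf1, rfl⟩ ⟨x2, hx2, y2, hy2, hf2, rfl⟩
        refine ⟨x1 + x2, P.add_mem hx1 hx2, y1 + y2, Q.add_mem hy1 hy2, ?_, by abel⟩
        have e1 : (⟨x1 + x2, P.add_mem hx1 hx2⟩ : P) = ⟨x1, hx1⟩ + ⟨x2, hx2⟩ := rfl
        have e2 : (⟨y1 + y2, Q.add_mem hy1 hy2⟩ : Q) = ⟨y1, hy1⟩ + ⟨y2, hy2⟩ := rfl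
        rw [e1, e2, Submodule.Quotient.mk_add, Submodule.Quotient.mk_add, map_add,
          hf1, hf2]
      smul_mem' := by
        rintro r a ⟨x, hx, y, hy, hf, rfl⟩
        refine ⟨r • x, P.smul_mem r hx, r • y, Q.smul_mem r hy, ?_, smul_sub r x y⟩
        have e1 : (⟨r • x, P.smul_mem r hx⟩ : P) = r • ⟨x, hx⟩ := rfl
        have e2 : (⟨r • y, Q.smul_mem r hy⟩ : Q) = r • ⟨y, hy⟩ := rfl
        rw [e1, e2, Submodule.Quotient.mk_smul, Submodule.Quotient.mk_smul, map_smul, hf] }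
  -- key: it suffices to show f kills each mk ⟨x, hx⟩
  suffices hz : ∀ (x : M) (hx : x ∈ P), f (Submodule.Quotient.mk ⟨x, hx⟩) = 0 by
    ext v
    exact hz v.1 v.2
  -- two consequences of y ∈ P ⊓ Q
  have hmkQ : ∀ (y : M) (hy : y ∈ Q), y ∈ P →
      (Submodule.Quotient.mk ⟨y, hy⟩ : Q ⧸ (P ⊓ Q).comap Q.subtype) = 0 := by
    intro y hy hyP
    rw [Submodule.Quotient.mk_eq_zero]
    exact ⟨hyP, hy⟩
  have hmkP : ∀ (x : M) (hx : x ∈ P), x ∈ Q →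
      (Submodule.Quotient.mk ⟨x, hx⟩ : P ⧸ (P ⊓ Q).comap P.subtype) = 0 := by
    intro x hx hxQ
    rw [Submodule.Quotient.mk_eq_zero]
    exact ⟨hx, hxQ⟩
  -- if N ≤ P then f = 0
  have hNP : N ≤ P → ∀ (x : M) (hx : x ∈ P), f (Submodule.Quotient.mk ⟨x, hx⟩) = 0 := by
    intro hNP x hx
    obtain ⟨⟨y, hy⟩, hfy⟩ := Submodule.Quotient.mk_surjective _
      (f (Submodule.Quotient.mk ⟨x, hx⟩))
    have hmem : x - y ∈ N := ⟨x, hx, y, hy, hfy.symm, rfl⟩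
    have hyP : y ∈ P := by
      have := hNP hmem
      have : x - (x - y) ∈ P := P.sub_mem hx this
      simpa using this
    rw [← hfy, hmkQ y hy hyP]
  rcases h with hirr | hhol
  · -- strongly irreducible case: N ⊓ Q ≤ P
    have hNQ : N ⊓ Q ≤ P := by
      rintro m ⟨⟨x, hx, y, hy, hfy, rfl⟩, hmQ⟩
      have hxQ : x ∈ Q := by
        have : (x - y) + y ∈ Q := Q.add_mem hmQ hy
        simpa using this
      have h0 : (Submodule.Quotient.mk ⟨x, hx⟩ : P ⧸ (P ⊓ Q).comap P.subtype) = 0 :=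
        hmkP x hx hxQ
      rw [h0, map_zero] at hfy
      have hyP : y ∈ P := ((Submodule.Quotient.mk_eq_zero _).mp hfy.symm).1
      exact P.sub_mem hx hyP
    rcases hirr N Q hNQ with hNP' | hQP
    · exact hNP hNP'
    · intro x hx
      obtain ⟨⟨y, hy⟩, hfy⟩ := Submodule.Quotient.mk_surjective _
        (f (Submodule.Quotient.mk ⟨x, hx⟩))
      rw [← hfy, hmkQ y hy (hQP hy)]
  · -- strongly hollow case: P ≤ N ⊔ Q
    have hPNQ : P ≤ N ⊔ Q := by
      intro x hx
      obtain ⟨⟨y, hy⟩, hfy⟩ := Submodule.Quotient.mk_surjective _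
        (f (Submodule.Quotient.mk ⟨x, hx⟩))
      have hmem : x - y ∈ N := ⟨x, hx, y, hy, hfy.symm, rfl⟩
      have : (x - y) + y ∈ N ⊔ Q :=
        Submodule.add_mem_sup hmem hy
      simpa using this
    rcases hhol N Q hPNQ with hPN | hPQ
    · intro x hx
      obtain ⟨x', hx', y', hy', hfy', hxeq⟩ := hPN hx
      have hy'P : y' ∈ P := by
        have : x' - x ∈ P := P.sub_mem hx' hx
        have h2 : x' - x = y' := by rw [hxeq]; abel
        rwa [h2] at this
      have hxx' : (Submodule.Quotient.mk ⟨x, hx⟩ : P ⧸ (P ⊓ Q).comap P.subtype) =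
          Submodule.Quotient.mk ⟨x', hx'⟩ := by
        rw [Submodule.Quotient.eq]
        have : ((⟨x, hx⟩ : P) - ⟨x', hx'⟩ : P).1 = x - x' := rfl
        refine Submodule.mem_comap.mpr ?_
        show ((⟨x, hx⟩ : P) - ⟨x', hx'⟩ : P).1 ∈ P ⊓ Q
        rw [this]
        constructor
        · exact P.sub_mem hx hx'
        · have : x - x' = -y' := by rw [hxeq]; abel
          rw [this]; exact Q.neg_mem hy'
      rw [hxx', hfy', hmkQ y' hy' hy'P]
    · intro x hx
      rw [hmkP x hx (hPQ hx), map_zero]
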